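/- Let κ be a regular cardinal and λ < κ a cardinal. If there exists a ◇*(κ)-sequence, then 2^λ ≤ κ. -/

import Mathlib

open Cardinal

/-- `C` is a club (closed unbounded) subset of the ordinal `o`. -/
def IsClubIn (C : Set Ordinal) (o : Ordinal) : Prop :=
  C ⊆ Set.Iio o ∧ (∀ a < o, ∃ b ∈ C, a ≤ b) ∧
    (∀ a < o, a ≠ 0 → (∀ b < a, ∃ c ∈ C, b < c ∧ c < a) → a ∈ C)

/-- `S` is a `◇*(κ)`-sequence: each `S α` is a family of fewer than `κ` subsets of `α`,
and every `X ⊆ κ` is guessed on a set of `α`'s containing a club. -/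
def IsDiamondStarSeq (κ : Cardinal.{0}) (S : Ordinal.{0} → Set (Set Ordinal.{0})) : Prop :=
  (∀ α < κ.ord, (∀ x ∈ S α, x ⊆ Set.Iio α) ∧ #(S α) < Cardinal.lift.{1} κ) ∧
    ∀ X ⊆ Set.Iio κ.ord, ∃ C, IsClubIn C κ.ord ∧ ∀ α ∈ C, X ∩ Set.Iio α ∈ S α

/-- if `κ` is regular, `λ < κ` and a `◇*(κ)`-sequence exists,
then `2^λ ≤ κ`. -/
theorem diamondStar_implies_pow_le (κ l : Cardinal.{0}) (hreg : κ.IsRegular) (hl : l < κ)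
    (S : Ordinal.{0} → Set (Set Ordinal.{0})) (hS : IsDiamondStarSeq κ S) :
    2 ^ l ≤ κ := by
  have hκ0 : Cardinal.aleph0 ≤ κ := hreg.aleph0_le
  have hlord : l.ord < κ.ord := Cardinal.ord_lt_ord.2 hl
  have key : ∀ X : Set Ordinal, X ⊆ Set.Iio l.ord → ∃ α : Ordinal, α < κ.ord ∧ X ∈ S α := by
    intro X hX
    obtain ⟨C, ⟨hC1, hC2, _⟩, hC4⟩ := hS.2 X (hX.trans (Set.Iio_subset_Iio hlord.le))
    obtain ⟨α, hαC, hlα⟩ := hC2 l.ord hlord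
    refine ⟨α, hC1 hαC, ?_⟩
    have hXα : X ∩ Set.Iio α = X :=
      Set.inter_eq_left.2 (hX.trans (Set.Iio_subset_Iio hlα))
    rw [← hXα]
    exact hC4 α hαC
  choose g hg1 hg2 using fun (X : ↥(𝒫 (Set.Iio l.ord))) => key X.1 X.2
  let F : ↥(𝒫 (Set.Iio l.ord)) → Σ α : ↥(Set.Iio κ.ord), ↥(S α.1) :=
    fun X => ⟨⟨g X, hg1 X⟩, ⟨X.1, hg2 X⟩⟩
  have hF : Function.Injective F := by
    intro X Y h
    have h2 := congrArg (fun p : Σ α : ↥(Set.Iio κ.ord), ↥(S α.1) => (p.2 : Set Ordinal)) h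
    exact Subtype.ext h2
  have hne : Nonempty ↥(Set.Iio κ.ord) :=
    ⟨⟨0, lt_of_le_of_lt zero_le hlord⟩⟩
  have hsup : (⨆ α : ↥(Set.Iio κ.ord), #↥(S α.1)) ≤ Cardinal.lift.{1} κ :=
    ciSup_le fun α => ((hS.1 α.1 α.2).2).le
  have hcard : Cardinal.lift.{1} (2 ^ l) ≤ Cardinal.lift.{1} κ := by
    rw [Cardinal.lift_two_power]
    calc 2 ^ Cardinal.lift.{1} l = #↥(𝒫 (Set.Iio l.ord)) := by
          rw [Cardinal.mk_powerset, Ordinal.mk_Iio_ordinal, Cardinal.card_ord]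
      _ ≤ #(Σ α : ↥(Set.Iio κ.ord), ↥(S α.1)) := Cardinal.mk_le_of_injective hF
      _ = Cardinal.sum (fun α : ↥(Set.Iio κ.ord) => #↥(S α.1)) := Cardinal.mk_sigma _
      _ ≤ #↥(Set.Iio κ.ord) * ⨆ α : ↥(Set.Iio κ.ord), #↥(S α.1) := Cardinal.sum_le_mk_mul_iSup _
      _ ≤ Cardinal.lift.{1} κ * Cardinal.lift.{1} κ := by
          rw [Ordinal.mk_Iio_ordinal, Cardinal.card_ord]
          exact mul_le_mul' le_rfl hsup
      _ = Cardinal.lift.{1} κ :=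
          Cardinal.mul_eq_self (Cardinal.aleph0_le_lift.2 hκ0)
  exact Cardinal.lift_le.1 hcard
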